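/- Let E be a directed graph, K a field, and c a cycle without exits based at a vertex v. Then the ℤ-graded L_K(E)-module KL_{c^∞} is graded isomorphic to N_{vc} = L_K(E)v (with its grading induced from L_K(E)), and both are graded simple L_K(E)-modules. -/

import Mathlib

open scoped Classical

/-- A directed graph: vertices, edges, source and range maps. -/
structure DirGraph : Type 1 where
  V : Type
  E : Type
  s : E → V
  r : E → V

namespace DirGraph

variable (G : DirGraph)

/-- A finite path: a source vertex together with a compatible list of edges
(the empty list gives the path of length 0 at `src`). -/
structure FinPath where
  src : G.V
  edges : List G.E
  src_eq : ∀ e ∈ edges.head?, G.s e = src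
  chain : edges.Chain' (fun e f => G.r e = G.s f)

variable {G}

/-- The range of a finite path. -/
def FinPath.rng (μ : G.FinPath) : G.V :=
  ((μ.edges.getLast?).map G.r).getD μ.src

/-- The length of a finite path. -/
def FinPath.length (μ : G.FinPath) : ℕ := μ.edges.length

variable (G)

/-- An infinite path. -/
structure InfPath where
  edges : ℕ → G.E
  chain : ∀ n, G.r (edges n) = G.s (edges (n + 1))

/-- The source of an infinite path. -/
def InfPath.src {G : DirGraph} (p : G.InfPath) : G.V := G.s (p.edges 0)

def IsSink (v : G.V) : Prop := ∀ e, G.s e ≠ v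

def IsInfEmitter (v : G.V) : Prop := {e | G.s e = v}.Infinite

def IsSingular (v : G.V) : Prop := IsSink G v ∨ IsInfEmitter G v

/-- Boundary paths: infinite paths, together with finite paths ending in a singular vertex. -/
def BPath : Type := {x : G.FinPath ⊕ G.InfPath // ∀ μ, x = Sum.inl μ → IsSingular G μ.rng}

variable {G}

/-- The source of a boundary path. -/
def BPath.src (x : G.BPath) : G.V :=
  match x.1 with
  | Sum.inl μ => μ.src
  | Sum.inr p => p.src

def BPath.IsInfinite (x : G.BPath) : Prop := ∃ p, x.1 = Sum.inr p

/-- `IsCat μ p x` means `x = μ p`, i.e. `x` is the concatenation of the finite path `μ`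
with the boundary path `p` (in particular `r(μ) = s(p)`). -/
def IsCat (μ : G.FinPath) (p x : G.BPath) : Prop :=
  μ.rng = p.src ∧
  match p.1, x.1 with
  | Sum.inl q, Sum.inl ξ => ξ.src = μ.src ∧ ξ.edges = μ.edges ++ q.edges
  | Sum.inr q, Sum.inr ξ =>
      (∀ (i : ℕ) (h : i < μ.edges.length), ξ.edges i = μ.edges.get ⟨i, h⟩) ∧
      (∀ i : ℕ, ξ.edges (μ.edges.length + i) = q.edges i)
  | _, _ => False

/-- `x ∼_k y` : tail equivalence with lag `k`. -/
def TailEqLag (x y : G.BPath) (k : ℤ) : Prop :=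
  ∃ (μ ν : G.FinPath) (p : G.BPath),
    IsCat μ p x ∧ IsCat ν p y ∧ (μ.length : ℤ) - (ν.length : ℤ) = k

/-- Tail equivalence. -/
def TailEq (x y : G.BPath) : Prop := ∃ k, TailEqLag x y k

/-- The tail-equivalence class (orbit) of a boundary path. -/
def orbit (x : G.BPath) : Set G.BPath := {y | TailEq y x}

/-- A closed path: positive length, same source and range. -/
def FinPath.IsClosed (c : G.FinPath) : Prop := 0 < c.length ∧ c.rng = c.src

/-- A boundary path is rational if it is tail equivalent to `c^∞` for some closed path `c`;
here `c^∞` is characterized as the unique boundary path `p` with `p = c p`. -/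
def IsRational (x : G.BPath) : Prop :=
  ∃ (c : G.FinPath) (p : G.BPath), 0 < c.length ∧ IsCat c p p ∧ TailEq x p

/-- A simple closed path: a closed path which is not a proper power of a closed path. -/
def FinPath.IsSimpleClosed (c : G.FinPath) : Prop :=
  c.IsClosed ∧
    ¬ ∃ (d : G.FinPath) (n : ℕ), 2 ≤ n ∧ d.IsClosed ∧ c.src = d.src ∧
        c.edges = (List.replicate n d.edges).flatten

/-- A cycle: a closed path passing through no vertex twice. -/
def FinPath.IsCycle (c : G.FinPath) : Prop := c.IsClosed ∧ (c.edges.map G.s).Nodup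

/-- An exit for a finite path. -/
def FinPath.HasExit (c : G.FinPath) : Prop :=
  ∃ (i : ℕ) (h : i < c.edges.length) (e : G.E),
    G.s e = G.s (c.edges.get ⟨i, h⟩) ∧ e ≠ c.edges.get ⟨i, h⟩

/-- `c` is a rotation of `d`. -/
def FinPath.IsRotationOf (c d : G.FinPath) : Prop := ∃ i, c.edges = d.edges.rotate i

/-- A maximal cycle: a cycle such that any cycle from which there is a finite path to its
source is a rotation of it. -/
def FinPath.IsMaxCycle (c : G.FinPath) : Prop :=
  c.IsCycle ∧ ∀ d : G.FinPath, d.IsCycle →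
    (∃ μ : G.FinPath, μ.src = d.src ∧ μ.rng = c.src) → d.IsRotationOf c

/-- A maximal sink: a sink with no finite path from the source of any cycle to it. -/
def IsMaxSink (G : DirGraph) (v : G.V) : Prop :=
  IsSink G v ∧ ¬ ∃ (d μ : G.FinPath), d.IsCycle ∧ μ.src = d.src ∧ μ.rng = v

/-- A graph is row-finite if every vertex emits finitely many edges. -/
def RowFinite (G : DirGraph) : Prop := ∀ v : G.V, {e | G.s e = v}.Finite

/-- The set of predecessors of a vertex. -/
def preds (G : DirGraph) (v : G.V) : Set G.V := {w | ∃ μ : G.FinPath, μ.src = w ∧ μ.rng = v}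

/-- The finite path of length 0 at a vertex. -/
def vertexPath (G : DirGraph) (v : G.V) : G.FinPath :=
  ⟨v, [], by intro e he; simp at he, List.isChain_nil⟩

/-- A singular vertex, seen as a boundary path. -/
def vertexBPath (G : DirGraph) (v : G.V) (h : IsSingular G v) : G.BPath :=
  ⟨Sum.inl (vertexPath G v), by
    intro μ hμ
    injection hμ with h2
    subst h2
    exact h⟩

/-- The finite path consisting of a single edge. -/
def singleE (G : DirGraph) (e : G.E) : G.FinPath :=
  ⟨G.s e, [e], by
    intro f hf
    simp only [List.head?_cons, Option.mem_def, Option.some.injEq] at hf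
    subst hf
    rfl, List.isChain_singleton e⟩

/-- `a_μ`: the product of the values of `a` along a finite path. -/
def aval {G : DirGraph} {K : Type} [Field K] (a : G.E → K) (μ : G.FinPath) : K :=
  (μ.edges.map a).prod

/-! ## The Leavitt path algebra -/

/-- Generators of the Leavitt path algebra: vertices, edges and ghost edges. -/
inductive Gen (G : DirGraph) : Type
  | vtx : G.V → Gen G
  | edg : G.E → Gen G
  | ghd : G.E → Gen G

/-- The defining relations of the Leavitt path algebra. -/
inductive LRel (G : DirGraph) (K : Type) [Field K] :
    FreeAlgebra K (Gen G) → FreeAlgebra K (Gen G) → Prop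
  | vv_eq (v : G.V) :
      LRel G K (FreeAlgebra.ι K (Gen.vtx v) * FreeAlgebra.ι K (Gen.vtx v))
        (FreeAlgebra.ι K (Gen.vtx v))
  | vv_ne {v w : G.V} (h : v ≠ w) :
      LRel G K (FreeAlgebra.ι K (Gen.vtx v) * FreeAlgebra.ι K (Gen.vtx w)) 0
  | e1l (e : G.E) :
      LRel G K (FreeAlgebra.ι K (Gen.vtx (G.s e)) * FreeAlgebra.ι K (Gen.edg e))
        (FreeAlgebra.ι K (Gen.edg e))
  | e1r (e : G.E) :
      LRel G K (FreeAlgebra.ι K (Gen.edg e) * FreeAlgebra.ι K (Gen.vtx (G.r e)))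
        (FreeAlgebra.ι K (Gen.edg e))
  | e2l (e : G.E) :
      LRel G K (FreeAlgebra.ι K (Gen.vtx (G.r e)) * FreeAlgebra.ι K (Gen.ghd e))
        (FreeAlgebra.ι K (Gen.ghd e))
  | e2r (e : G.E) :
      LRel G K (FreeAlgebra.ι K (Gen.ghd e) * FreeAlgebra.ι K (Gen.vtx (G.s e)))
        (FreeAlgebra.ι K (Gen.ghd e))
  | ck1_eq (e : G.E) :
      LRel G K (FreeAlgebra.ι K (Gen.ghd e) * FreeAlgebra.ι K (Gen.edg e))
        (FreeAlgebra.ι K (Gen.vtx (G.r e)))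
  | ck1_ne {e f : G.E} (h : e ≠ f) :
      LRel G K (FreeAlgebra.ι K (Gen.ghd e) * FreeAlgebra.ι K (Gen.edg f)) 0
  | ck2 (v : G.V) (hfin : {e | G.s e = v}.Finite) (hne : ∃ e, G.s e = v) :
      LRel G K (FreeAlgebra.ι K (Gen.vtx v))
        (∑ e ∈ hfin.toFinset, FreeAlgebra.ι K (Gen.edg e) * FreeAlgebra.ι K (Gen.ghd e))

/-- The Leavitt path algebra of `G` over `K`. -/
abbrev LPA (G : DirGraph) (K : Type) [Field K] : Type := RingQuot (LRel G K)

/-- The image of a vertex in the Leavitt path algebra. -/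
def ofV (G : DirGraph) (K : Type) [Field K] (v : G.V) : LPA G K :=
  RingQuot.mkAlgHom K (LRel G K) (FreeAlgebra.ι K (Gen.vtx v))

/-- The image of an edge in the Leavitt path algebra. -/
def ofE (G : DirGraph) (K : Type) [Field K] (e : G.E) : LPA G K :=
  RingQuot.mkAlgHom K (LRel G K) (FreeAlgebra.ι K (Gen.edg e))

/-- The image of a ghost edge in the Leavitt path algebra. -/
def ofG (G : DirGraph) (K : Type) [Field K] (e : G.E) : LPA G K :=
  RingQuot.mkAlgHom K (LRel G K) (FreeAlgebra.ι K (Gen.ghd e))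

/-- The element `μ` of the Leavitt path algebra associated to a finite path `μ`. -/
def pathElem (G : DirGraph) (K : Type) [Field K] (μ : G.FinPath) : LPA G K :=
  ofV G K μ.src * (μ.edges.map (ofE G K)).prod

/-- The element `μ^*` of the Leavitt path algebra associated to a finite path `μ`. -/
def pathStarElem (G : DirGraph) (K : Type) [Field K] (μ : G.FinPath) : LPA G K :=
  (μ.edges.reverse.map (ofG G K)).prod * ofV G K μ.src

/-- The degree-`n` homogeneous component of the canonical `ℤ`-grading of the Leavitt
path algebra: the span of the monomials `μ ν^*` with `|μ| - |ν| = n`. -/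
def LPAdeg (G : DirGraph) (K : Type) [Field K] (n : ℤ) : Submodule K (LPA G K) :=
  Submodule.span K {x | ∃ μ ν : G.FinPath, μ.rng = ν.rng ∧
    (μ.length : ℤ) - (ν.length : ℤ) = n ∧ x = pathElem G K μ * pathStarElem G K ν}

/-- `W` is a `ℤ`-grading making `M` a graded module over the canonically graded
Leavitt path algebra. -/
def IsModuleGrading (G : DirGraph) (K : Type) [Field K] (M : Type) [AddCommGroup M]
    [Module K M] [Module (LPA G K) M] (W : ℤ → Submodule K M) : Prop :=
  DirectSum.IsInternal W ∧
    ∀ (m k : ℤ) (a : LPA G K) (y : M), a ∈ LPAdeg G K m → y ∈ W k → a • y ∈ W (m + k)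

/-- A set is graded (with respect to a grading `W`) if each of its elements is a finite sum
of homogeneous elements of the set. -/
def GradedCarrier {K M : Type} [Field K] [AddCommGroup M] [Module K M]
    (W : ℤ → Submodule K M) (S : Set M) : Prop :=
  ∀ m ∈ S, ∃ l : List M, (∀ z ∈ l, z ∈ S ∧ ∃ k, z ∈ W k) ∧ l.sum = m

/-- A graded isomorphism between graded modules over the Leavitt path algebra. -/
def GradedIsoLPA (G : DirGraph) (K : Type) [Field K] (M N : Type)
    [AddCommGroup M] [AddCommGroup N] [Module K M] [Module K N]
    [Module (LPA G K) M] [Module (LPA G K) N]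
    (W : ℤ → Submodule K M) (W' : ℤ → Submodule K N) : Prop :=
  ∃ f : M ≃ₗ[LPA G K] N, (∀ k, ∀ m ∈ W k, f m ∈ W' k) ∧ ∀ k, ∀ n ∈ W' k, f.symm n ∈ W k

/-- A module over the Leavitt path algebra is unital if it is generated by the images of the
vertices. -/
def IsUnitalModule (G : DirGraph) (K : Type) [Field K] (M : Type) [AddCommGroup M]
    [Module (LPA G K) M] : Prop :=
  ∀ m : M, m ∈ Submodule.span (LPA G K) {y : M | ∃ (v : G.V) (m' : M), y = ofV G K v • m'}

/-! ## Chen modules, specified by a basis and the action of the generators -/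

/-- A specification of the (twisted) Chen module attached to a boundary path `x`:
an `L_K(E)`-module `M` which is a `K'`-vector space with basis the tail-equivalence class
of `x`, the generators acting by the τ-twisted shift formulas. Here `K ⊆ K'` is a field
extension and `τ : E¹ → K'` is a family of nonzero scalars. -/
structure ChenSpecT (G : DirGraph) (K K' : Type) [Field K] [Field K'] [Algebra K K']
    (τ : G.E → K') (x : G.BPath) (M : Type) [AddCommGroup M] [Module K' M]
    [Module (LPA G K) M] : Type where
  tau_ne : ∀ e, τ e ≠ 0
  basis : Module.Basis (orbit x) K' M
  act_v : ∀ (v : G.V) (p : orbit x),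
    ofV G K v • basis p = if v = BPath.src (p : G.BPath) then basis p else 0
  act_e : ∀ (e : G.E) (p q : orbit x), IsCat (singleE G e) (p : G.BPath) (q : G.BPath) →
    ofE G K e • basis p = τ e • basis q
  act_e_zero : ∀ (e : G.E) (p : orbit x),
    (¬ ∃ q : G.BPath, IsCat (singleE G e) (p : G.BPath) q) → ofE G K e • basis p = 0
  act_g : ∀ (e : G.E) (p q : orbit x), IsCat (singleE G e) (p : G.BPath) (q : G.BPath) →
    ofG G K e • basis q = (τ e)⁻¹ • basis p
  act_g_zero : ∀ (e : G.E) (q : orbit x),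
    (¬ ∃ p : G.BPath, IsCat (singleE G e) p (q : G.BPath)) → ofG G K e • basis q = 0

/-- Specification of the Chen module `V_{[x]}^a` twisted by `a : E¹ → K^*`
(`a = 1` gives `V_{[x]}`). -/
abbrev ChenSpec (G : DirGraph) (K : Type) [Field K] (a : G.E → K) (x : G.BPath) (M : Type)
    [AddCommGroup M] [Module K M] [Module (LPA G K) M] : Type :=
  ChenSpecT G K K a x M

/-- The canonical grading on a Chen module: the degree-`k` component is spanned by the basis
elements tail-equivalent to `x` with lag `k`. -/
def chenW {G : DirGraph} {K' : Type} [Field K'] {x : G.BPath} {M : Type}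
    [AddCommGroup M] [Module K' M] (b : Module.Basis (orbit x) K' M) (k : ℤ) : Submodule K' M :=
  Submodule.span K' (⇑b '' {p : orbit x | TailEqLag (p : G.BPath) x k})

/-! ## The module `K L_x` -/

/-- The set `L_x` of pairs `(y, k)` with `y ∼_k x`. -/
def Lset (G : DirGraph) (x : G.BPath) : Set (G.BPath × ℤ) := {yk | TailEqLag yk.1 x yk.2}

/-- The underlying `K`-vector space of the module `K L_x`, with basis `L_x`. -/
abbrev KLCarrier (G : DirGraph) (K : Type) [Field K] (x : G.BPath) : Type := (Lset G x) →₀ K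

/-- Specification of the `L_K(E)`-module structure on `K L_x`, given by
`(μ ν^*) ⬝ (y, k) = (μ p, |μ| - |ν| + k)` when `y = ν p`, and `0` otherwise. The module
structure is encoded as a `K`-algebra homomorphism `ρ` to the endomorphism algebra. -/
def KLSpec (G : DirGraph) (K : Type) [Field K] (x : G.BPath)
    (ρ : LPA G K →ₐ[K] Module.End K (KLCarrier G K x)) : Prop :=
  (∀ (μ ν : G.FinPath), μ.rng = ν.rng → ∀ (yk zk : Lset G x) (p : G.BPath),
      IsCat ν p (yk : G.BPath × ℤ).1 → IsCat μ p (zk : G.BPath × ℤ).1 →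
      (zk : G.BPath × ℤ).2 = (yk : G.BPath × ℤ).2 + (μ.length : ℤ) - (ν.length : ℤ) →
      ρ (pathElem G K μ * pathStarElem G K ν) (Finsupp.single yk 1) = Finsupp.single zk 1) ∧
  (∀ (μ ν : G.FinPath), μ.rng = ν.rng → ∀ yk : Lset G x,
      (¬ ∃ p : G.BPath, IsCat ν p (yk : G.BPath × ℤ).1) →
      ρ (pathElem G K μ * pathStarElem G K ν) (Finsupp.single yk 1) = 0)

/-- The canonical grading of `K L_x`: `(y, k)` is homogeneous of degree `k`. -/
noncomputable def KLgr (G : DirGraph) (K : Type) [Field K] (x : G.BPath) (k : ℤ) :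
    Submodule K (KLCarrier G K x) :=
  Submodule.span K {m | ∃ yk : Lset G x, (yk : G.BPath × ℤ).2 = k ∧ m = Finsupp.single yk 1}

end DirGraph

namespace DirGraph

variable {G : DirGraph}

theorem FinPath.ext' {μ ν : G.FinPath} (h1 : μ.src = ν.src) (h2 : μ.edges = ν.edges) :
    μ = ν := by
  cases μ; cases ν; simp_all

theorem InfPath.ext' {p q : G.InfPath} (h : ∀ i, p.edges i = q.edges i) : p = q := by
  cases p with
  | mk e c =>
    cases q with
    | mk e' c' =>
      have : e = e' := funext h
      subst this
      rfl

/-- An infinite path, as a boundary path. -/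
def infBP (ξ : G.InfPath) : G.BPath := ⟨Sum.inr ξ, by intro μ h; simp at h⟩

theorem infBP_src (ξ : G.InfPath) : (infBP ξ).src = G.s (ξ.edges 0) := rfl

theorem rng_eq_getLast {μ : G.FinPath} (h : μ.edges ≠ []) :
    μ.rng = G.r (μ.edges.getLast h) := by
  simp [FinPath.rng, List.getLast?_eq_getLast h]

/-- The prefix of length `n` of an infinite path. -/
def prefixFP (ξ : G.InfPath) (n : ℕ) : G.FinPath where
  src := ξ.src
  edges := (List.range n).map ξ.edges
  src_eq := by
    intro e he
    cases n with
    | zero => simp at he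
    | succ m =>
      rw [List.range_succ_eq_map] at he
      simp at he
      rw [← he]; rfl
  chain := by
    show List.IsChain _ _
    rw [List.isChain_map]
    cases n with
    | zero => simp
    | succ m =>
      rw [List.isChain_range_succ]
      intro i _
      exact ξ.chain i

@[simp] theorem prefixFP_length (ξ : G.InfPath) (n : ℕ) :
    (prefixFP ξ n).edges.length = n := by simp [prefixFP]

@[simp] theorem prefixFP_len (ξ : G.InfPath) (n : ℕ) :
    (prefixFP ξ n).length = n := by simp [FinPath.length, prefixFP]

theorem prefixFP_get (ξ : G.InfPath) (n i : ℕ) (h : i < ((prefixFP ξ n).edges).length) :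
    (prefixFP ξ n).edges.get ⟨i, h⟩ = ξ.edges i := by
  simp [prefixFP]

theorem prefixFP_rng (ξ : G.InfPath) (n : ℕ) :
    (prefixFP ξ n).rng = G.s (ξ.edges n) := by
  cases n with
  | zero => simp [prefixFP, FinPath.rng]; rfl
  | succ m =>
    have h : (prefixFP ξ (m+1)).edges ≠ [] := by simp [prefixFP]
    rw [rng_eq_getLast h]
    have : (prefixFP ξ (m+1)).edges.getLast h = ξ.edges m := by
      simp [prefixFP, List.range_succ]
    rw [this, ξ.chain m]

/-- The tail of an infinite path after `n` steps. -/
def tailIP (ξ : G.InfPath) (n : ℕ) : G.InfPath where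
  edges i := ξ.edges (n + i)
  chain i := by
    have := ξ.chain (n + i)
    rwa [show n + i + 1 = n + (i+1) by ring] at this

@[simp] theorem tailIP_edges (ξ : G.InfPath) (n i : ℕ) :
    (tailIP ξ n).edges i = ξ.edges (n + i) := rfl

theorem tailIP_tailIP (ξ : G.InfPath) (m n : ℕ) :
    tailIP (tailIP ξ m) n = tailIP ξ (m + n) := by
  apply InfPath.ext'; intro i; simp [tailIP, add_assoc]

theorem tailIP_zero (ξ : G.InfPath) : tailIP ξ 0 = ξ := by
  apply InfPath.ext'; intro i; simp [tailIP]

theorem tailIP_src (ξ : G.InfPath) (n : ℕ) : (tailIP ξ n).src = G.s (ξ.edges n) := by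
  simp [InfPath.src]

theorem isCat_prefix (ξ : G.InfPath) (n : ℕ) :
    IsCat (prefixFP ξ n) (infBP (tailIP ξ n)) (infBP ξ) := by
  constructor
  · rw [prefixFP_rng]
    show _ = (tailIP ξ n).src
    rw [tailIP_src]
  · show (∀ (i : ℕ) (h : i < (prefixFP ξ n).edges.length),
        ξ.edges i = (prefixFP ξ n).edges.get ⟨i, h⟩) ∧
      (∀ i : ℕ, ξ.edges ((prefixFP ξ n).edges.length + i) = (tailIP ξ n).edges i)
    constructor
    · intro i h; rw [prefixFP_get]
    · intro i; simp

theorem isCat_inr_elim {μ : G.FinPath} {p x : G.BPath} {ξ : G.InfPath}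
    (hx : x.1 = Sum.inr ξ) (h : IsCat μ p x) :
    μ = prefixFP ξ μ.edges.length ∧ p = infBP (tailIP ξ μ.edges.length) := by
  obtain ⟨p1, hp⟩ := p
  obtain ⟨x1, hX⟩ := x
  simp only at hx
  subst hx
  obtain ⟨h1, h2⟩ := h
  cases p1 with
  | inl q => exact (h2 : False).elim
  | inr q =>
    replace h2 : (∀ (i : ℕ) (hi : i < μ.edges.length), ξ.edges i = μ.edges.get ⟨i, hi⟩) ∧
        (∀ i : ℕ, ξ.edges (μ.edges.length + i) = q.edges i) := h2
    have hq : q = tailIP ξ μ.edges.length := by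
      apply InfPath.ext'; intro i; rw [tailIP_edges, h2.2 i]
    have hsrc : BPath.src (⟨Sum.inr q, hp⟩ : G.BPath) = q.src := rfl
    constructor
    · apply FinPath.ext'
      · -- sources agree
        rcases he : μ.edges with _ | ⟨e, rest⟩
        · -- length 0: use h1 : μ.rng = src q
          have h0 : μ.rng = μ.src := by simp [FinPath.rng, he]
          have : q.src = G.s (ξ.edges 0) := by
            have := h2.2 0
            rw [he] at this
            simp at this
            simp [InfPath.src, ← this]
          rw [hsrc] at h1
          rw [← h0, h1, this]; rfl
        · have : G.s e = μ.src := μ.src_eq e (by simp [he])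
          have hg : μ.edges.get ⟨0, by simp [he]⟩ = e := by simp [he]
          have := h2.1 0 (by simp [he])
          rw [hg] at this
          rw [← ‹G.s e = μ.src›, ← this]; rfl
      · apply List.ext_get (by simp)
        intro i hi1 hi2
        rw [prefixFP_get, ← h2.1 i hi1]
    · exact Subtype.ext (by simp [infBP, hq])

/-- Concatenation of a finite path with an infinite path. -/
def concatIP (μ : G.FinPath) (ξ : G.InfPath) (h : μ.rng = ξ.src) : G.InfPath where
  edges i := if hi : i < μ.edges.length then μ.edges.get ⟨i, hi⟩ else ξ.edges (i - μ.edges.length)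
  chain i := by
    show G.r (if hi : i < μ.edges.length then μ.edges.get ⟨i, hi⟩
        else ξ.edges (i - μ.edges.length)) =
      G.s (if hi : i + 1 < μ.edges.length then μ.edges.get ⟨i+1, hi⟩
        else ξ.edges (i + 1 - μ.edges.length))
    rcases lt_trichotomy (i+1) μ.edges.length with h1 | h1 | h1
    · rw [dif_pos h1, dif_pos (Nat.lt_of_succ_lt h1)]
      exact List.isChain_iff_getElem.mp μ.chain i h1
    · rw [dif_pos (show i < μ.edges.length by omega), dif_neg (by omega),
        show i + 1 - μ.edges.length = 0 by omega]
      have hne : μ.edges ≠ [] := by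
        intro hc; rw [hc] at h1; simp at h1
      have : μ.edges.get ⟨i, by omega⟩ = μ.edges.getLast hne := by
        rw [List.getLast_eq_getElem]
        simp only [List.get_eq_getElem]
        congr 1
        omega
      rw [this, ← rng_eq_getLast hne, h]
      rfl
    · rw [dif_neg (by omega), dif_neg (by omega)]
      have := ξ.chain (i - μ.edges.length)
      rwa [show i - μ.edges.length + 1 = i + 1 - μ.edges.length by omega] at this


theorem eq_infBP {x : G.BPath} {ξ : G.InfPath} (hx : x.1 = Sum.inr ξ) : x = infBP ξ :=
  Subtype.ext hx

theorem isCat_inr_of_inr' {μ : G.FinPath} {p x : G.BPath} {η : G.InfPath}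
    (hp : p.1 = Sum.inr η) (h : IsCat μ p x) : ∃ ξ, x.1 = Sum.inr ξ := by
  obtain ⟨p1, hP⟩ := p
  obtain ⟨x1, hX⟩ := x
  simp only at hp
  subst hp
  obtain ⟨_, h2⟩ := h
  cases x1 with
  | inl q => exact (h2 : False).elim
  | inr q => exact ⟨q, rfl⟩

theorem isCat_p_inr {μ : G.FinPath} {p x : G.BPath} {ξ : G.InfPath}
    (hx : x.1 = Sum.inr ξ) (h : IsCat μ p x) : ∃ η, p.1 = Sum.inr η :=
  ⟨_, by rw [(isCat_inr_elim hx h).2]; rfl⟩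

theorem tailEqLag_inr {y z : G.BPath} {ζ : G.InfPath} (hz : z.1 = Sum.inr ζ) {k : ℤ}
    (h : TailEqLag y z k) : ∃ ξ, y.1 = Sum.inr ξ := by
  obtain ⟨μ, ν, p, h1, h2, _⟩ := h
  obtain ⟨η, hp⟩ := isCat_p_inr hz h2
  exact isCat_inr_of_inr' hp h1

theorem isCat_comp {x : G.BPath} {ξ : G.InfPath} (hx : x.1 = Sum.inr ξ) {μ α : G.FinPath}
    {p t : G.BPath} (h1 : IsCat μ p x) (h2 : IsCat α t p) :
    IsCat (prefixFP ξ (μ.edges.length + α.edges.length)) t x := by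
  obtain ⟨hμ, hp⟩ := isCat_inr_elim hx h1
  rw [hp] at h2
  obtain ⟨hα, ht⟩ := isCat_inr_elim rfl h2
  rw [eq_infBP hx, ht, tailIP_tailIP]
  exact isCat_prefix ξ _

theorem diamond {ξ : G.InfPath} {μ ν : G.FinPath} {p q : G.BPath}
    (hμ : IsCat μ p (infBP ξ)) (hν : IsCat ν q (infBP ξ)) :
    ∃ (α β : G.FinPath) (t : G.BPath), IsCat α t p ∧ IsCat β t q ∧
      (α.length : ℤ) - β.length = (ν.length : ℤ) - μ.length := by
  obtain ⟨hμ1, hμ2⟩ := isCat_inr_elim rfl hμ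
  obtain ⟨hν1, hν2⟩ := isCat_inr_elim rfl hν
  rcases le_total μ.edges.length ν.edges.length with hle | hle
  · refine ⟨prefixFP (tailIP ξ μ.edges.length) (ν.edges.length - μ.edges.length),
      prefixFP (tailIP ξ ν.edges.length) 0, infBP (tailIP ξ ν.edges.length), ?_, ?_, ?_⟩
    · rw [hμ2]
      have := isCat_prefix (tailIP ξ μ.edges.length) (ν.edges.length - μ.edges.length)
      rwa [tailIP_tailIP, Nat.add_sub_cancel' hle] at this
    · rw [hν2]
      have := isCat_prefix (tailIP ξ ν.edges.length) 0
      rwa [tailIP_tailIP, Nat.add_zero] at this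
    · simp only [FinPath.length, prefixFP_length]
      push_cast
      omega
  · refine ⟨prefixFP (tailIP ξ μ.edges.length) 0,
      prefixFP (tailIP ξ ν.edges.length) (μ.edges.length - ν.edges.length),
      infBP (tailIP ξ μ.edges.length), ?_, ?_, ?_⟩
    · rw [hμ2]
      have := isCat_prefix (tailIP ξ μ.edges.length) 0
      rwa [tailIP_tailIP, Nat.add_zero] at this
    · rw [hν2]
      have := isCat_prefix (tailIP ξ ν.edges.length) (μ.edges.length - ν.edges.length)
      rwa [tailIP_tailIP, Nat.add_sub_cancel' hle] at this
    · simp only [FinPath.length, prefixFP_length]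
      push_cast
      omega

theorem tailEqLag_transfer {a b z : G.BPath} {ζ : G.InfPath} (hz : z.1 = Sum.inr ζ)
    {m m' : ℤ} (ha : TailEqLag a z m) (hb : TailEqLag b z m') : TailEqLag b a (m' - m) := by
  obtain ⟨ξa, hxa⟩ := tailEqLag_inr hz ha
  obtain ⟨ξb, hxb⟩ := tailEqLag_inr hz hb
  obtain ⟨μ, ν, p, h1, h2, h3⟩ := ha
  obtain ⟨μ', ν', p', h1', h2', h3'⟩ := hb
  rw [eq_infBP hz] at h2 h2'
  obtain ⟨α, β, t, hα, hβ, hlag⟩ := diamond h2 h2'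
  refine ⟨prefixFP ξb (μ'.edges.length + β.edges.length),
    prefixFP ξa (μ.edges.length + α.edges.length), t,
    isCat_comp hxb h1' hβ, isCat_comp hxa h1 hα, ?_⟩
  simp only [FinPath.length, prefixFP_length] at *
  push_cast at *
  omega

theorem tailEqLag_trans {b y z : G.BPath} {ξy ζ : G.InfPath}
    (hy : y.1 = Sum.inr ξy) (hz : z.1 = Sum.inr ζ) {s k : ℤ}
    (h1 : TailEqLag b y s) (h2 : TailEqLag y z k) : TailEqLag b z (s + k) := by
  obtain ⟨ξb, hxb⟩ := tailEqLag_inr hy h1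
  obtain ⟨γ, δ, t₁, hγ, hδ, hs⟩ := h1
  obtain ⟨μ₁, ν₁, p, hμ₁, hν₁, hk⟩ := h2
  rw [eq_infBP hy] at hδ hμ₁
  obtain ⟨α, β, t, hα, hβ, hlag⟩ := diamond hδ hμ₁
  refine ⟨prefixFP ξb (γ.edges.length + α.edges.length),
    prefixFP ζ (ν₁.edges.length + β.edges.length), t,
    isCat_comp hxb hγ hα, isCat_comp hz hν₁ hβ, ?_⟩
  simp only [FinPath.length, prefixFP_length] at *
  push_cast at *
  omega

theorem closed_cat_inr {c : G.FinPath} {p₀ : G.BPath} (hlen : c.edges ≠ [])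
    (hp : IsCat c p₀ p₀) : ∃ ξ, p₀.1 = Sum.inr ξ := by
  obtain ⟨p1, hP⟩ := p₀
  obtain ⟨_, h2⟩ := hp
  cases p1 with
  | inl q =>
    replace h2 : q.src = c.src ∧ q.edges = c.edges ++ q.edges := h2
    have := congrArg List.length h2.2
    simp at this
    exact absurd this hlen
  | inr q => exact ⟨q, rfl⟩


theorem isCat_concat (μ : G.FinPath) (ξ : G.InfPath) (h : μ.rng = ξ.src) :
    IsCat μ (infBP ξ) (infBP (concatIP μ ξ h)) := by
  constructor
  · exact h
  · show (∀ (i : ℕ) (hi : i < μ.edges.length),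
        (concatIP μ ξ h).edges i = μ.edges.get ⟨i, hi⟩) ∧
      (∀ i : ℕ, (concatIP μ ξ h).edges (μ.edges.length + i) = ξ.edges i)
    constructor
    · intro i hi; simp [concatIP, dif_pos hi]
    · intro i; simp [concatIP]


section Algebra

variable (K : Type) [Field K]

theorem rel_vv (v : G.V) : ofV G K v * ofV G K v = ofV G K v := by
  simp only [ofV, ← map_mul]
  exact RingQuot.mkAlgHom_rel K (LRel.vv_eq v)

theorem rel_vv_ne {v w : G.V} (h : v ≠ w) : ofV G K v * ofV G K w = 0 := by
  simp only [ofV, ← map_mul]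
  rw [RingQuot.mkAlgHom_rel K (LRel.vv_ne h), map_zero]

theorem rel_e1l (e : G.E) : ofV G K (G.s e) * ofE G K e = ofE G K e := by
  simp only [ofV, ofE, ← map_mul]
  exact RingQuot.mkAlgHom_rel K (LRel.e1l e)

theorem rel_e1r (e : G.E) : ofE G K e * ofV G K (G.r e) = ofE G K e := by
  simp only [ofV, ofE, ← map_mul]
  exact RingQuot.mkAlgHom_rel K (LRel.e1r e)

theorem rel_e2l (e : G.E) : ofV G K (G.r e) * ofG G K e = ofG G K e := by
  simp only [ofV, ofG, ← map_mul]
  exact RingQuot.mkAlgHom_rel K (LRel.e2l e)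

theorem rel_e2r (e : G.E) : ofG G K e * ofV G K (G.s e) = ofG G K e := by
  simp only [ofV, ofG, ← map_mul]
  exact RingQuot.mkAlgHom_rel K (LRel.e2r e)

theorem rel_ck1 (e : G.E) : ofG G K e * ofE G K e = ofV G K (G.r e) := by
  simp only [ofV, ofE, ofG, ← map_mul]
  exact RingQuot.mkAlgHom_rel K (LRel.ck1_eq e)

theorem rel_ck1_ne {e f : G.E} (h : e ≠ f) : ofG G K e * ofE G K f = 0 := by
  simp only [ofE, ofG, ← map_mul]
  rw [RingQuot.mkAlgHom_rel K (LRel.ck1_ne h), map_zero]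

theorem rel_ck2_single {w : G.V} {e : G.E} (he : ∀ f, G.s f = w ↔ f = e) :
    ofV G K w = ofE G K e * ofG G K e := by
  have hset : {f | G.s f = w} = {e} := Set.ext he
  have hfin : {f : G.E | G.s f = w}.Finite := hset ▸ Set.finite_singleton e
  have hne : ∃ f, G.s f = w := ⟨e, (he e).mpr rfl⟩
  have hrel := RingQuot.mkAlgHom_rel K (LRel.ck2 (G := G) (K := K) w hfin hne)
  have htf : hfin.toFinset = {e} := by
    ext f
    simp [hset]
  rw [htf] at hrel
  simp only [Finset.sum_singleton] at hrel
  simp only [ofV, ofE, ofG, ← map_mul]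
  exact hrel

theorem ofE_mul_ofV_ne {e : G.E} {w : G.V} (h : w ≠ G.r e) :
    ofE G K e * ofV G K w = 0 := by
  rw [← rel_e1r K e, mul_assoc, rel_vv_ne K (fun hc => h hc.symm), mul_zero]

theorem ofV_mul_ofE_ne {e : G.E} {w : G.V} (h : w ≠ G.s e) :
    ofV G K w * ofE G K e = 0 := by
  rw [← rel_e1l K e, ← mul_assoc, rel_vv_ne K h, zero_mul]

theorem ofG_mul_ofV_ne {e : G.E} {w : G.V} (h : w ≠ G.s e) :
    ofG G K e * ofV G K w = 0 := by
  rw [← rel_e2r K e, mul_assoc, rel_vv_ne K (fun hc => (h hc.symm).elim), mul_zero]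

theorem ofV_mul_ofG_ne {e : G.E} {w : G.V} (h : w ≠ G.r e) :
    ofV G K w * ofG G K e = 0 := by
  rw [← rel_e2l K e, ← mul_assoc, rel_vv_ne K h, zero_mul]

@[simp] theorem pe_vertex (w : G.V) : pathElem G K (vertexPath G w) = ofV G K w := by
  simp [pathElem, vertexPath]

@[simp] theorem ps_vertex (w : G.V) : pathStarElem G K (vertexPath G w) = ofV G K w := by
  simp [pathStarElem, vertexPath]

theorem pe_prefix_zero (ξ : G.InfPath) : pathElem G K (prefixFP ξ 0) = ofV G K ξ.src := by
  simp [pathElem, prefixFP]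

theorem pe_prefix_succ (ξ : G.InfPath) (n : ℕ) :
    pathElem G K (prefixFP ξ (n+1)) = pathElem G K (prefixFP ξ n) * ofE G K (ξ.edges n) := by
  simp [pathElem, prefixFP, List.range_succ, mul_assoc]

theorem ps_prefix_zero (ξ : G.InfPath) :
    pathStarElem G K (prefixFP ξ 0) = ofV G K ξ.src := by
  simp [pathStarElem, prefixFP]

theorem ps_prefix_succ (ξ : G.InfPath) (n : ℕ) :
    pathStarElem G K (prefixFP ξ (n+1)) =
      ofG G K (ξ.edges n) * pathStarElem G K (prefixFP ξ n) := by
  simp [pathStarElem, prefixFP, List.range_succ, mul_assoc]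

theorem absorb_ps (ξ : G.InfPath) (l : ℕ) :
    ofV G K ((prefixFP ξ l).rng) * pathStarElem G K (prefixFP ξ l) =
      pathStarElem G K (prefixFP ξ l) := by
  cases l with
  | zero =>
    rw [prefixFP_rng, ps_prefix_zero]
    exact rel_vv K ξ.src
  | succ j =>
    rw [prefixFP_rng, ps_prefix_succ, ← mul_assoc, ← ξ.chain j, rel_e2l]

theorem pe_src_absorb (μ : G.FinPath) :
    ofV G K μ.src * pathElem G K μ = pathElem G K μ := by
  rw [pathElem, ← mul_assoc, rel_vv]

theorem ofV_mul_pe_ne {μ : G.FinPath} {w : G.V} (h : w ≠ μ.src) :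
    ofV G K w * pathElem G K μ = 0 := by
  rw [pathElem, ← mul_assoc, rel_vv_ne K h, zero_mul]

/-- Prepending an edge to a finite path. -/
def consFP (e : G.E) (μ : G.FinPath) (h : G.r e = μ.src) : G.FinPath where
  src := G.s e
  edges := e :: μ.edges
  src_eq := by intro f hf; simp at hf; rw [hf]
  chain := by
    show List.IsChain _ _
    rw [List.isChain_cons]
    exact ⟨fun b hb => by rw [h, ← μ.src_eq b hb], μ.chain⟩

theorem rng_consFP (e : G.E) (μ : G.FinPath) (h : G.r e = μ.src) :
    (consFP e μ h).rng = μ.rng := by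
  rcases he : μ.edges with _ | ⟨a, l⟩
  · simp [FinPath.rng, consFP, he, h]
  · have hl : (a :: l).getLast? = some ((a :: l).getLast (by simp)) :=
      List.getLast?_eq_getLast (by simp)
    simp [FinPath.rng, consFP, he, hl]

@[simp] theorem length_consFP (e : G.E) (μ : G.FinPath) (h : G.r e = μ.src) :
    (consFP e μ h).edges.length = μ.edges.length + 1 := by simp [consFP]

theorem pe_consFP (e : G.E) (μ : G.FinPath) (h : G.r e = μ.src) :
    pathElem G K (consFP e μ h) = ofE G K e * pathElem G K μ := by
  show ofV G K (G.s e) * ((e :: μ.edges).map (ofE G K)).prod = _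
  rw [List.map_cons, List.prod_cons, ← mul_assoc, rel_e1l, pathElem, ← mul_assoc, ← h,
    rel_e1r]

/-- Removing the first edge of a finite path. -/
def tailFP (μ : G.FinPath) (e : G.E) (rest : List G.E) (he : μ.edges = e :: rest) :
    G.FinPath where
  src := G.r e
  edges := rest
  src_eq := by
    intro f hf
    have := μ.chain
    rw [he] at this; change List.IsChain _ _ at this; rw [List.isChain_cons] at this
    exact (this.1 f hf).symm
  chain := by
    have := μ.chain
    rw [he] at this; change List.IsChain _ _ at this; rw [List.isChain_cons] at this
    exact this.2

theorem rng_tailFP (μ : G.FinPath) (e : G.E) (rest : List G.E) (he : μ.edges = e :: rest) :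
    (tailFP μ e rest he).rng = μ.rng := by
  rcases rest with _ | ⟨a, l⟩
  · simp [FinPath.rng, tailFP, he]
  · have hl : (a :: l).getLast? = some ((a :: l).getLast (by simp)) :=
      List.getLast?_eq_getLast (by simp)
    simp [FinPath.rng, tailFP, he, hl]

theorem pe_tailFP (μ : G.FinPath) (e : G.E) (rest : List G.E) (he : μ.edges = e :: rest) :
    pathElem G K μ = ofE G K e * pathElem G K (tailFP μ e rest he) := by
  have hsrc : μ.src = G.s e := (μ.src_eq e (by simp [he])).symm
  rw [pathElem, he, hsrc, List.map_cons, List.prod_cons, ← mul_assoc, rel_e1l]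
  show _ = ofE G K e * (ofV G K (G.r e) * (rest.map (ofE G K)).prod)
  rw [← mul_assoc, rel_e1r]

end Algebra


section MEq

variable (K : Type) [Field K]

theorem mStep {ξy ξ₀ : G.InfPath}
    (hck : ∀ l : ℕ, ofV G K (G.s (ξ₀.edges l)) = ofE G K (ξ₀.edges l) * ofG G K (ξ₀.edges l))
    (n l : ℕ) (hc : ξy.edges n = ξ₀.edges l) :
    pathElem G K (prefixFP ξy n) * pathStarElem G K (prefixFP ξ₀ l) =
      pathElem G K (prefixFP ξy (n+1)) * pathStarElem G K (prefixFP ξ₀ (l+1)) := by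
  rw [pe_prefix_succ, ps_prefix_succ, mul_assoc, ← mul_assoc (ofE G K (ξy.edges n)), hc,
    ← hck l, ← prefixFP_rng, absorb_ps]

theorem mEq {ξy ξ₀ : G.InfPath}
    (hck : ∀ l : ℕ, ofV G K (G.s (ξ₀.edges l)) = ofE G K (ξ₀.edges l) * ofG G K (ξ₀.edges l)) :
    ∀ (d n l : ℕ), (∀ i, ξy.edges (n + i) = ξ₀.edges (l + i)) →
    pathElem G K (prefixFP ξy n) * pathStarElem G K (prefixFP ξ₀ l) =
      pathElem G K (prefixFP ξy (n+d)) * pathStarElem G K (prefixFP ξ₀ (l+d)) := by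
  intro d
  induction d with
  | zero => intro n l _; simp
  | succ d ih =>
    intro n l hc
    rw [mStep K hck n l (by simpa using hc 0)]
    have e1 : n + (d + 1) = (n + 1) + d := by omega
    have e2 : l + (d + 1) = (l + 1) + d := by omega
    rw [e1, e2]
    exact ih (n+1) (l+1) (fun i => by
      have := hc (i + 1)
      rwa [show n + (i+1) = n + 1 + i by omega, show l + (i+1) = l + 1 + i by omega] at this)

theorem mEq2 {ξy ξ₀ : G.InfPath}
    (hck : ∀ l : ℕ, ofV G K (G.s (ξ₀.edges l)) = ofE G K (ξ₀.edges l) * ofG G K (ξ₀.edges l))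
    (n l n' l' : ℕ) (hc : ∀ i, ξy.edges (n + i) = ξ₀.edges (l + i))
    (hc' : ∀ i, ξy.edges (n' + i) = ξ₀.edges (l' + i))
    (hd : (n : ℤ) - l = (n' : ℤ) - l') :
    pathElem G K (prefixFP ξy n) * pathStarElem G K (prefixFP ξ₀ l) =
      pathElem G K (prefixFP ξy n') * pathStarElem G K (prefixFP ξ₀ l') := by
  rcases le_total l l' with h | h
  · obtain ⟨d, rfl⟩ : ∃ d, l' = l + d := ⟨l' - l, by omega⟩
    obtain rfl : n' = n + d := by omega
    exact mEq K hck d n l hc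
  · obtain ⟨d, rfl⟩ : ∃ d, l = l' + d := ⟨l - l', by omega⟩
    obtain rfl : n = n' + d := by omega
    exact (mEq K hck d n' l' hc').symm

end MEq


theorem listGetCongr {X : Type} (l : List X) (i j : ℕ) (h : i < l.length)
    (h' : j < l.length) (hij : i = j) : l.get ⟨i, h⟩ = l.get ⟨j, h'⟩ := by
  subst hij; rfl

theorem infBP_inj {ξ η : G.InfPath} (h : infBP ξ = infBP η) : ξ = η := by
  have := Subtype.ext_iff.mp h
  simpa [infBP] using this

/-- Evaluation of the representation at a fixed vector, as a linear map. -/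
noncomputable def evalAt {K : Type} [Field K] {x : G.BPath}
    (ρ : LPA G K →ₐ[K] Module.End K (KLCarrier G K x)) (w : KLCarrier G K x) :
    LPA G K →ₗ[K] KLCarrier G K x where
  toFun η := ρ η w
  map_add' a b := by simp only [map_add]; rfl
  map_smul' a b := by simp only [map_smul]; rfl

@[simp] theorem evalAt_apply {K : Type} [Field K] {x : G.BPath}
    (ρ : LPA G K →ₐ[K] Module.End K (KLCarrier G K x)) (w : KLCarrier G K x) (η : LPA G K) :
    evalAt ρ w η = ρ η w := rfl

end DirGraph

open DirGraph

set_option maxHeartbeats 2000000 in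
/-- for a cycle `c` without exits based at `v`, the `ℤ`-graded
`L_K(E)`-module `K L_{c^∞}` is graded isomorphic to `N_{vc} = L_K(E)v` (with its grading
induced from `L_K(E)`), and both are graded simple. -/
theorem stmt_12 (G : DirGraph) (K : Type) [Field K]
    (c : G.FinPath) (v : G.V) (hcyc : c.IsCycle) (hnoexit : ¬ c.HasExit)
    (hbase : c.src = v) (p₀ : G.BPath) (hp : IsCat c p₀ p₀)
    (ρ : LPA G K →ₐ[K] Module.End K (KLCarrier G K p₀)) (hρ : KLSpec G K p₀ ρ) :
    -- graded isomorphism `K L_{c^∞} ≅ L_K(E) v`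
    (∃ f : KLCarrier G K p₀ ≃ₗ[K] ↥(Submodule.span (LPA G K) {ofV G K v}),
      (∀ (η : LPA G K) (w : KLCarrier G K p₀),
        (f (ρ η w) : LPA G K) = η • (f w : LPA G K)) ∧
      (∀ k : ℤ, ∀ w ∈ KLgr G K p₀ k, (f w : LPA G K) ∈ LPAdeg G K k) ∧
      (∀ (k : ℤ) (z : ↥(Submodule.span (LPA G K) {ofV G K v})),
        (z : LPA G K) ∈ LPAdeg G K k → f.symm z ∈ KLgr G K p₀ k)) ∧
    -- `K L_{c^∞}` is graded simple
    ((∃ w : KLCarrier G K p₀, w ≠ 0) ∧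
      ∀ P : Submodule K (KLCarrier G K p₀), (∀ (η : LPA G K), ∀ w ∈ P, ρ η w ∈ P) →
        GradedCarrier (fun k => KLgr G K p₀ k) ↑P → P = ⊥ ∨ P = ⊤) ∧
    -- `N_{vc}` is graded simple
    (Submodule.span (LPA G K) {ofV G K v} ≠ ⊥ ∧
      ∀ Q : Submodule (LPA G K) (LPA G K), Q ≤ Submodule.span (LPA G K) {ofV G K v} →
        GradedCarrier (fun k => LPAdeg G K k) ↑Q →
        Q = ⊥ ∨ Q = Submodule.span (LPA G K) {ofV G K v}) := by
  classical
  -- ## Setup: the infinite path ξ₀ underlying p₀ = c^∞, and its periodicity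
  have hlen : c.edges ≠ [] := by
    have h0 := hcyc.1.1
    simp only [FinPath.length] at h0
    exact List.ne_nil_of_length_pos h0
  obtain ⟨ξ₀, hP⟩ := closed_cat_inr hlen hp
  have hpp : p₀ = infBP ξ₀ := eq_infBP hP
  have hn₀ : 0 < c.edges.length := List.length_pos_iff.mpr hlen
  have hp' := hp
  rw [hpp] at hp'
  obtain ⟨hpre, hper0⟩ : (∀ (i : ℕ) (h : i < c.edges.length),
      ξ₀.edges i = c.edges.get ⟨i, h⟩) ∧
      (∀ i : ℕ, ξ₀.edges (c.edges.length + i) = ξ₀.edges i) := hp'.2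
  have hper : ∀ i, ξ₀.edges i = c.edges.get ⟨i % c.edges.length, Nat.mod_lt i hn₀⟩ := by
    intro i
    induction i using Nat.strong_induction_on with
    | _ i ih =>
      rcases lt_or_ge i c.edges.length with h | h
      · rw [hpre i h]
        exact listGetCongr _ _ _ _ _ (Nat.mod_eq_of_lt h).symm
      · have h1 := hper0 (i - c.edges.length)
        rw [show c.edges.length + (i - c.edges.length) = i by omega] at h1
        rw [h1, ih (i - c.edges.length) (by omega)]
        exact listGetCongr _ _ _ _ _ (Nat.mod_eq_sub_mod h).symm
  have huniq : ∀ (l : ℕ) (e : G.E), G.s e = G.s (ξ₀.edges l) → e = ξ₀.edges l := by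
    intro l e he
    rw [hper l] at he ⊢
    by_contra hne
    exact hnoexit ⟨l % c.edges.length, Nat.mod_lt l hn₀, e, he, hne⟩
  have hck : ∀ l : ℕ,
      ofV G K (G.s (ξ₀.edges l)) = ofE G K (ξ₀.edges l) * ofG G K (ξ₀.edges l) :=
    fun l => rel_ck2_single K (fun f => ⟨huniq l f, fun h => by rw [h]⟩)
  have hsrc0 : G.s (ξ₀.edges 0) = v := by
    rcases hce : c.edges with _ | ⟨e0, rest⟩
    · exact absurd hce hlen
    · have h1 : ξ₀.edges 0 = e0 := by
        rw [hper 0]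
        simp [hce]
      have h2 : G.s e0 = c.src := c.src_eq e0 (by simp [hce])
      rw [h1, h2, hbase]
  have hsrcξ : ξ₀.src = v := hsrc0
  have catp : ∀ l : ℕ, IsCat (prefixFP ξ₀ l) (infBP (tailIP ξ₀ l)) p₀ := by
    intro l; rw [hpp]; exact isCat_prefix ξ₀ l
  have catp0 : IsCat (prefixFP ξ₀ 0) p₀ p₀ := by
    have h := catp 0
    rwa [tailIP_zero, ← hpp] at h
  -- ## The base point (c^∞, 0) of L_{c^∞}
  have x₀mem : (p₀, (0:ℤ)) ∈ Lset G p₀ :=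
    ⟨prefixFP ξ₀ 0, prefixFP ξ₀ 0, p₀, catp0, catp0, by simp⟩
  set x₀p : ↥(Lset G p₀) := ⟨(p₀, 0), x₀mem⟩ with hx₀p
  set x₀vec : KLCarrier G K p₀ := Finsupp.single x₀p 1 with hx₀vec
  -- ## Choice of representing monomials, and the maps f₀ (= f) and evalAt ρ x₀vec (= g)
  have hmem' : ∀ yk : ↥(Lset G p₀),
      TailEqLag (yk : G.BPath × ℤ).1 p₀ (yk : G.BPath × ℤ).2 := fun yk => yk.2
  choose μch νch tch hc1 hc2 hc3 using hmem'
  have hmem2 : ∀ yk : ↥(Lset G p₀),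
      TailEqLag (yk : G.BPath × ℤ).1 p₀ (yk : G.BPath × ℤ).2 := fun yk => yk.2
  set mono : ↥(Lset G p₀) → LPA G K :=
    fun yk => pathElem G K (μch yk) * pathStarElem G K (νch yk) with hmono
  set f₀ : KLCarrier G K p₀ →ₗ[K] LPA G K := Finsupp.linearCombination K mono with hf₀
  have f₀_single : ∀ yk : ↥(Lset G p₀), f₀ (Finsupp.single yk 1) = mono yk := by
    intro yk
    rw [hf₀, Finsupp.linearCombination_single, one_smul]
  have ξof : ∀ yk : ↥(Lset G p₀), ∃ ξ, (yk : G.BPath × ℤ).1.1 = Sum.inr ξ :=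
    fun yk => tailEqLag_inr hP (hmem2 yk)
  -- ## Uniqueness of representing monomials in the Leavitt path algebra
  have repr_eq : ∀ (yk : ↥(Lset G p₀)) (μ ν : G.FinPath) (t : G.BPath),
      IsCat μ t (yk : G.BPath × ℤ).1 → IsCat ν t p₀ →
      (μ.length : ℤ) - ν.length = (yk : G.BPath × ℤ).2 →
      pathElem G K μ * pathStarElem G K ν = mono yk := by
    intro yk μ ν t h1 h2 h3
    obtain ⟨ξy, hy⟩ := ξof yk
    obtain ⟨hμe, hte⟩ := isCat_inr_elim hy h1
    obtain ⟨hνe, hte'⟩ := isCat_inr_elim hP h2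
    have hcompat : ∀ i, ξy.edges (μ.edges.length + i) = ξ₀.edges (ν.edges.length + i) := by
      intro i
      have h := congrArg (fun z : G.InfPath => z.edges i) (infBP_inj (hte.symm.trans hte'))
      simpa using h
    obtain ⟨hμe2, hte2⟩ := isCat_inr_elim hy (hc1 yk)
    obtain ⟨hνe2, hte2'⟩ := isCat_inr_elim hP (hc2 yk)
    have hcompat2 : ∀ i, ξy.edges ((μch yk).edges.length + i)
        = ξ₀.edges ((νch yk).edges.length + i) := by
      intro i
      have h := congrArg (fun z : G.InfPath => z.edges i) (infBP_inj (hte2.symm.trans hte2'))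
      simpa using h
    have hdeg : (μ.edges.length : ℤ) - ν.edges.length
        = ((μch yk).edges.length : ℤ) - (νch yk).edges.length := by
      have h4 := hc3 yk
      simp only [FinPath.length] at h3 h4
      omega
    calc pathElem G K μ * pathStarElem G K ν
        = pathElem G K (prefixFP ξy μ.edges.length)
            * pathStarElem G K (prefixFP ξ₀ ν.edges.length) := by
          conv_lhs => rw [hμe, hνe]
      _ = pathElem G K (prefixFP ξy (μch yk).edges.length)
            * pathStarElem G K (prefixFP ξ₀ (νch yk).edges.length) :=
          mEq2 K hck _ _ _ _ hcompat hcompat2 hdeg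
      _ = mono yk := by
          simp only [hmono]
          conv_rhs => rw [hμe2, hνe2]
  -- ## The set of monomials μ (prefix of c^∞)^* spans the left ideal generated by v
  set SetS : Set (LPA G K) := {m | ∃ (μ : G.FinPath) (l : ℕ), μ.rng = G.s (ξ₀.edges l) ∧
    m = pathElem G K μ * pathStarElem G K (prefixFP ξ₀ l)} with hSetS
  have SsubRange : ∀ m ∈ SetS, ∃ w, f₀ w = m := by
    rintro m ⟨μ, l, hrng, rfl⟩
    have h' : μ.rng = (tailIP ξ₀ l).src := by rw [hrng, tailIP_src]
    have hcat : IsCat μ (infBP (tailIP ξ₀ l)) (infBP (concatIP μ (tailIP ξ₀ l) h')) :=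
      isCat_concat μ (tailIP ξ₀ l) h'
    have hmemY : (infBP (concatIP μ (tailIP ξ₀ l) h'), (μ.length : ℤ) - l) ∈ Lset G p₀ :=
      ⟨μ, prefixFP ξ₀ l, infBP (tailIP ξ₀ l), hcat, catp l, by simp⟩
    refine ⟨Finsupp.single ⟨_, hmemY⟩ 1, ?_⟩
    rw [f₀_single]
    exact (repr_eq ⟨_, hmemY⟩ μ (prefixFP ξ₀ l) (infBP (tailIP ξ₀ l)) hcat (catp l)
      (by simp)).symm
  have mul_mem_span : ∀ η : LPA G K, ∀ m ∈ Submodule.span K SetS,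
      η * m ∈ Submodule.span K SetS := by
    have hgen : ∀ (g : LPA G K), (∀ m ∈ SetS, g * m ∈ Submodule.span K SetS) →
        ∀ m ∈ Submodule.span K SetS, g * m ∈ Submodule.span K SetS := by
      intro g hg m hm
      induction hm using Submodule.span_induction with
      | mem x h => exact hg x h
      | zero => rw [mul_zero]; exact Submodule.zero_mem _
      | add x y _ _ hx hy => rw [mul_add]; exact Submodule.add_mem _ hx hy
      | smul a x _ hx => rw [mul_smul_comm]; exact Submodule.smul_mem _ a hx
    intro η
    obtain ⟨a, rfl⟩ := RingQuot.mkAlgHom_surjective K (LRel G K) η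
    induction a using FreeAlgebra.induction with
    | grade0 k =>
      intro m hm
      rw [AlgHom.commutes, ← Algebra.smul_def]
      exact Submodule.smul_mem _ k hm
    | grade1 x =>
      cases x with
      | vtx w =>
        refine hgen _ ?_
        rintro m ⟨μ, l, hrng, rfl⟩
        show ofV G K w * _ ∈ _
        rcases eq_or_ne w μ.src with h | h
        · rw [← mul_assoc, h, pe_src_absorb]
          exact Submodule.subset_span ⟨μ, l, hrng, rfl⟩
        · rw [← mul_assoc, ofV_mul_pe_ne K h, zero_mul]
          exact Submodule.zero_mem _
      | edg e =>
        refine hgen _ ?_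
        rintro m ⟨μ, l, hrng, rfl⟩
        show ofE G K e * _ ∈ _
        rcases eq_or_ne (G.r e) μ.src with h | h
        · rw [← mul_assoc, ← pe_consFP K e μ h]
          exact Submodule.subset_span ⟨consFP e μ h, l, by rw [rng_consFP]; exact hrng, rfl⟩
        · rw [← mul_assoc, pathElem, ← mul_assoc,
            ofE_mul_ofV_ne K (fun hc => h hc.symm)]
          simp
      | ghd e =>
        refine hgen _ ?_
        rintro m ⟨μ, l, hrng, rfl⟩
        show ofG G K e * _ ∈ _
        rcases he : μ.edges with _ | ⟨e', rest⟩
        · have hrs : μ.rng = μ.src := by simp [FinPath.rng, he]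
          rcases eq_or_ne e (ξ₀.edges l) with heq | hne
          · have hsrc : μ.src = G.s e := by rw [← hrs, hrng, ← heq]
            have hpe : pathElem G K μ = ofV G K (G.s e) := by
              rw [pathElem, he, hsrc]; simp
            rw [← mul_assoc, hpe, rel_e2r, heq, ← ps_prefix_succ]
            refine Submodule.subset_span
              ⟨vertexPath G (G.s (ξ₀.edges (l+1))), l+1, ?_, ?_⟩
            · show (vertexPath G _).rng = _
              rfl
            · rw [pe_vertex, ← prefixFP_rng, absorb_ps]
          · have hse : μ.src ≠ G.s e := by
              intro hcc
              exact hne (huniq l e (by rw [← hcc, ← hrs, hrng]))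
            rw [← mul_assoc, pathElem, he]
            simp only [List.map_nil, List.prod_nil, mul_one]
            rw [ofG_mul_ofV_ne K hse]
            simp
        · rcases eq_or_ne e e' with heq | hne
          · subst heq
            have hts : (tailFP μ e rest he).src = G.r e := rfl
            rw [← mul_assoc, pe_tailFP K μ e rest he, ← mul_assoc, rel_ck1, ← hts,
              pe_src_absorb]
            exact Submodule.subset_span
              ⟨tailFP μ e rest he, l, by rw [rng_tailFP]; exact hrng, rfl⟩
          · rw [← mul_assoc, pe_tailFP K μ e' rest he, ← mul_assoc, rel_ck1_ne K hne]
            simp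
    | mul a b iha ihb =>
      intro m hm
      rw [map_mul, mul_assoc]
      exact iha _ (ihb m hm)
    | add a b iha ihb =>
      intro m hm
      rw [map_add, add_mul]
      exact Submodule.add_mem _ (iha m hm) (ihb m hm)
  have hv_mem : ofV G K v ∈ SetS := by
    refine ⟨vertexPath G v, 0, ?_, ?_⟩
    · show (vertexPath G v).rng = _
      rw [hsrc0]
      rfl
    · rw [pe_vertex, ps_prefix_zero, hsrcξ, rel_vv]
  have span_in_range : ∀ z ∈ Submodule.span (LPA G K) {ofV G K v}, ∃ w, f₀ w = z := by
    intro z hz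
    obtain ⟨η, rfl⟩ := Submodule.mem_span_singleton.mp hz
    have hin : η * ofV G K v ∈ Submodule.span K SetS :=
      mul_mem_span η _ (Submodule.subset_span hv_mem)
    have hle : Submodule.span K SetS ≤ LinearMap.range f₀ :=
      Submodule.span_le.mpr (fun m hm => by
        obtain ⟨w, hw⟩ := SsubRange m hm
        exact ⟨w, hw⟩)
    obtain ⟨w, hw⟩ := hle hin
    exact ⟨w, by rw [hw]; rfl⟩
  have fmemN : ∀ w, f₀ w ∈ Submodule.span (LPA G K) {ofV G K v} := by
    intro w
    have hyk : ∀ yk : ↥(Lset G p₀), mono yk ∈ Submodule.span (LPA G K) {ofV G K v} := by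
      intro yk
      have hsrc : (νch yk).src = v := by
        obtain ⟨hνe2, _⟩ := isCat_inr_elim hP (hc2 yk)
        rw [hνe2]
        exact hsrcξ
      show pathElem G K (μch yk) * pathStarElem G K (νch yk) ∈ _
      rw [pathStarElem, hsrc, ← mul_assoc, ← smul_eq_mul]
      exact Submodule.smul_mem _ _ (Submodule.mem_span_singleton_self _)
    rw [hf₀, Finsupp.linearCombination_apply, Finsupp.sum]
    refine Submodule.sum_mem _ (fun yk _ => ?_)
    exact Submodule.smul_of_tower_mem _ _ (hyk yk)
  have gtf : ∀ w, evalAt ρ x₀vec (f₀ w) = w := by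
    have hone : ∀ yk : ↥(Lset G p₀), ρ (mono yk) x₀vec = Finsupp.single yk 1 := by
      intro yk
      rw [hx₀vec]
      exact hρ.1 (μch yk) (νch yk) ((hc1 yk).1.trans (hc2 yk).1.symm) x₀p yk (tch yk)
        (hc2 yk) (hc1 yk) (by have h := hc3 yk; rw [hx₀p]; push_cast; omega)
    intro w
    induction w using Finsupp.induction_linear with
    | zero => simp
    | add f g hf hg => rw [map_add, map_add, hf, hg]
    | single yk b =>
      have hb : (Finsupp.single yk b : KLCarrier G K p₀) = b • Finsupp.single yk 1 := by
        rw [Finsupp.smul_single, smul_eq_mul, mul_one]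
      rw [hb, map_smul, map_smul, f₀_single]
      show b • ρ (mono yk) x₀vec = _
      rw [hone yk]
  have fgt : ∀ z ∈ Submodule.span (LPA G K) {ofV G K v}, f₀ (evalAt ρ x₀vec z) = z := by
    intro z hz
    obtain ⟨w, rfl⟩ := span_in_range z hz
    rw [gtf]
  -- ## The grading property of g = evalAt ρ x₀vec
  have gt_grading : ∀ (k : ℤ) (zz : LPA G K),
      zz ∈ LPAdeg G K k → ρ zz x₀vec ∈ KLgr G K p₀ k := by
    intro k zz hzz
    induction hzz using Submodule.span_induction with
    | mem x hx =>
      obtain ⟨μ, ν, hrng, hdeg, rfl⟩ := hx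
      by_cases hex : ∃ t : G.BPath, IsCat ν t p₀
      · obtain ⟨t, ht⟩ := hex
        obtain ⟨hνe, hte⟩ := isCat_inr_elim hP ht
        have h' : μ.rng = (tailIP ξ₀ ν.edges.length).src := by
          rw [hrng, tailIP_src]
          conv_lhs => rw [hνe]
          rw [prefixFP_rng]
        have hcat : IsCat μ t (infBP (concatIP μ (tailIP ξ₀ ν.edges.length) h')) := by
          rw [hte]
          exact isCat_concat _ _ _
        have hymem : (infBP (concatIP μ (tailIP ξ₀ ν.edges.length) h'), k) ∈ Lset G p₀ :=
          ⟨μ, ν, t, hcat, ht, hdeg⟩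
        have happ := hρ.1 μ ν hrng x₀p ⟨_, hymem⟩ t ht hcat
          (by rw [hx₀p]; simp only [FinPath.length] at hdeg ⊢; push_cast; omega)
        rw [hx₀vec, happ]
        exact Submodule.subset_span ⟨⟨_, hymem⟩, rfl, rfl⟩
      · rw [hx₀vec, hρ.2 μ ν hrng x₀p hex]
        exact Submodule.zero_mem _
    | zero =>
      rw [map_zero]
      exact Submodule.zero_mem _
    | add x y' _ _ ihx ihy =>
      rw [map_add]
      exact Submodule.add_mem _ ihx ihy
    | smul a x _ ihx =>
      rw [map_smul]
      exact Submodule.smul_mem _ a ihx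
  -- ## The graded simplicity of K L_{c^∞}
  have hx₀ne : x₀vec ≠ 0 := by
    rw [hx₀vec]
    exact fun h => one_ne_zero (Finsupp.single_eq_zero.mp h)
  have bullet2 : ∀ P : Submodule K (KLCarrier G K p₀),
      (∀ (η : LPA G K), ∀ w ∈ P, ρ η w ∈ P) →
      GradedCarrier (fun k => KLgr G K p₀ k) ↑P → P = ⊥ ∨ P = ⊤ := by
    intro P hPρ hPgr
    rcases eq_or_ne P ⊥ with hb | hb
    · exact Or.inl hb
    right
    -- a nonzero homogeneous element of P
    obtain ⟨m, hmP, hm0⟩ : ∃ m ∈ P, m ≠ 0 := by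
      by_contra hcc
      push_neg at hcc
      exact hb (by
        rw [eq_bot_iff]
        intro m hm
        simp [hcc m hm])
    obtain ⟨lst, hlst, hsum⟩ := hPgr m hmP
    obtain ⟨z, hzl, hz0⟩ : ∃ z ∈ lst, z ≠ 0 := by
      by_contra hcc
      push_neg at hcc
      exact hm0 (by rw [← hsum]; exact List.sum_eq_zero hcc)
    obtain ⟨hzP, k, hzk⟩ := hlst z hzl
    have hsupp : ∀ yk ∈ z.support, (yk : G.BPath × ℤ).2 = k := by
      have hle : KLgr G K p₀ k ≤
          Finsupp.supported K K {yk : ↥(Lset G p₀) | (yk : G.BPath × ℤ).2 = k} := by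
        apply Submodule.span_le.mpr
        rintro m' ⟨yk, hyk, rfl⟩
        exact Finsupp.single_mem_supported K 1 hyk
      intro yk hyk
      exact (Finsupp.mem_supported K z).mp (hle hzk) hyk
    obtain ⟨y₀, hy₀⟩ := Finsupp.support_nonempty_iff.mpr hz0
    set ξf : ↥(Lset G p₀) → G.InfPath := fun yk => (ξof yk).choose with hξfdef
    have hξf : ∀ yk : ↥(Lset G p₀), (yk : G.BPath × ℤ).1.1 = Sum.inr (ξf yk) :=
      fun yk => (ξof yk).choose_spec
    -- a bound beyond which all other support paths differ from y₀
    have hdiff : ∀ yk ∈ z.support.erase y₀, ∃ j, (ξf yk).edges j ≠ (ξf y₀).edges j := by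
      intro yk hyk
      by_contra hcc
      push_neg at hcc
      have hξeq : ξf yk = ξf y₀ := InfPath.ext' hcc
      have h1 : (yk : G.BPath × ℤ).1 = (y₀ : G.BPath × ℤ).1 :=
        Subtype.ext (by rw [hξf yk, hξf y₀, hξeq])
      have h2 : (yk : G.BPath × ℤ).2 = (y₀ : G.BPath × ℤ).2 := by
        rw [hsupp yk (Finset.mem_of_mem_erase hyk), hsupp y₀ hy₀]
      exact (Finset.ne_of_mem_erase hyk) (Subtype.ext (Prod.ext h1 h2))
    choose jf hjf using hdiff
    set nn : ℕ := (z.support.erase y₀).attach.sup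
      (fun yk => jf yk.1 yk.2 + 1) with hnn
    have hnbound : ∀ yk ∈ z.support.erase y₀,
        ∃ j < nn, (ξf yk).edges j ≠ (ξf y₀).edges j := by
      intro yk hyk
      refine ⟨jf yk hyk, ?_, hjf yk hyk⟩
      exact Nat.lt_of_lt_of_le (Nat.lt_succ_self _)
        (Finset.le_sup (f := fun yk : {x // x ∈ z.support.erase y₀} =>
          jf yk.1 yk.2 + 1) (Finset.mem_attach _ ⟨yk, hyk⟩))
    -- the tail point
    have hky₀ : (y₀ : G.BPath × ℤ).2 = k := hsupp y₀ hy₀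
    have hcaty₀ : IsCat (prefixFP (ξf y₀) nn) (infBP (tailIP (ξf y₀) nn))
        (y₀ : G.BPath × ℤ).1 := by
      rw [eq_infBP (hξf y₀)]
      exact isCat_prefix _ _
    have htail0 : IsCat (prefixFP (tailIP (ξf y₀) nn) 0) (infBP (tailIP (ξf y₀) nn))
        (infBP (tailIP (ξf y₀) nn)) := by
      have h := isCat_prefix (tailIP (ξf y₀) nn) 0
      rwa [tailIP_zero] at h
    have hq : (infBP (tailIP (ξf y₀) nn), k - nn) ∈ Lset G p₀ := by
      have h1 : TailEqLag (infBP (tailIP (ξf y₀) nn)) (y₀ : G.BPath × ℤ).1 (0 - (nn:ℤ)) :=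
        ⟨prefixFP (tailIP (ξf y₀) nn) 0, prefixFP (ξf y₀) nn, infBP (tailIP (ξf y₀) nn),
          htail0, hcaty₀, by simp⟩
      have h2 := tailEqLag_trans (hξf y₀) hP h1 (hmem2 y₀)
      rw [hky₀] at h2
      have : (0 - (nn:ℤ)) + k = k - nn := by ring
      rwa [this] at h2
    set qk : ↥(Lset G p₀) := ⟨(infBP (tailIP (ξf y₀) nn), k - nn), hq⟩ with hqk
    set T : LPA G K := pathElem G K (prefixFP (tailIP (ξf y₀) nn) 0)
      * pathStarElem G K (prefixFP (ξf y₀) nn) with hT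
    have hrngT : (prefixFP (tailIP (ξf y₀) nn) 0).rng = (prefixFP (ξf y₀) nn).rng := by
      rw [prefixFP_rng, prefixFP_rng, tailIP_edges, Nat.add_zero]
    have hT0 : ρ T (Finsupp.single y₀ 1) = Finsupp.single qk 1 := by
      rw [hT]
      exact hρ.1 _ _ hrngT y₀ qk (infBP (tailIP (ξf y₀) nn)) hcaty₀ htail0
        (by rw [hqk, hky₀]; simp)
    have hTkill : ∀ yk ∈ z.support, yk ≠ y₀ → ρ T (Finsupp.single yk 1) = 0 := by
      intro yk hyk hne
      rw [hT]
      refine hρ.2 _ _ hrngT yk ?_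
      rintro ⟨p, hpcat⟩
      have hpcat' : IsCat (prefixFP (ξf y₀) nn) p (infBP (ξf yk)) := by
        rw [← eq_infBP (hξf yk)]
        exact hpcat
      obtain ⟨pp, hP2⟩ := isCat_p_inr rfl hpcat'
      rw [eq_infBP hP2] at hpcat'
      have hfst := (hpcat'.2 : (∀ (i : ℕ) (h : i < (prefixFP (ξf y₀) nn).edges.length),
          (ξf yk).edges i = (prefixFP (ξf y₀) nn).edges.get ⟨i, h⟩) ∧
        (∀ i : ℕ, (ξf yk).edges ((prefixFP (ξf y₀) nn).edges.length + i) = pp.edges i)).1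
      obtain ⟨j, hj, hjne⟩ := hnbound yk (Finset.mem_erase.mpr ⟨hne, hyk⟩)
      have heq := hfst j (by simpa using hj)
      rw [prefixFP_get] at heq
      exact hjne heq
    have hTz : ρ T z = (z y₀) • Finsupp.single qk 1 := by
      have hzdec : z = ∑ yk ∈ z.support, Finsupp.single yk (z yk) :=
        (Finsupp.sum_single z).symm
      conv_lhs => rw [hzdec]
      rw [map_sum]
      rw [Finset.sum_eq_single y₀]
      · have hb : (Finsupp.single y₀ (z y₀) : KLCarrier G K p₀)
            = (z y₀) • Finsupp.single y₀ 1 := by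
          rw [Finsupp.smul_single, smul_eq_mul, mul_one]
        rw [hb, map_smul, hT0]
      · intro yk hyk hne
        have hb : (Finsupp.single yk (z yk) : KLCarrier G K p₀)
            = (z yk) • Finsupp.single yk 1 := by
          rw [Finsupp.smul_single, smul_eq_mul, mul_one]
        rw [hb, map_smul, hTkill yk hyk hne, smul_zero]
      · intro hy
        exact absurd hy₀ hy
    have hqP : Finsupp.single qk (1:K) ∈ P := by
      have hmem := hPρ T z hzP
      rw [hTz] at hmem
      have h2 := P.smul_mem (z y₀)⁻¹ hmem
      rwa [smul_smul, inv_mul_cancel₀ (Finsupp.mem_support_iff.mp hy₀), one_smul] at h2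
    have hall : ∀ yk : ↥(Lset G p₀), Finsupp.single yk (1:K) ∈ P := by
      intro yk
      have htr : TailEqLag (yk : G.BPath × ℤ).1 (qk : G.BPath × ℤ).1
          ((yk : G.BPath × ℤ).2 - (k - nn)) :=
        tailEqLag_transfer hP hq (hmem2 yk)
      obtain ⟨α, β, t, hα, hβ, hlag⟩ := htr
      have happ := hρ.1 α β (hα.1.trans hβ.1.symm) qk yk t hβ hα
        (by rw [hqk]; push_cast at hlag ⊢; omega)
      rw [← happ]
      exact hPρ _ _ hqP
    rw [eq_top_iff]
    intro w _
    have hdec : w = ∑ yk ∈ w.support, Finsupp.single yk (w yk) := (Finsupp.sum_single w).symm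
    rw [hdec]
    refine Submodule.sum_mem _ (fun yk _ => ?_)
    have hb : (Finsupp.single yk (w yk) : KLCarrier G K p₀)
        = (w yk) • Finsupp.single yk 1 := by
      rw [Finsupp.smul_single, smul_eq_mul, mul_one]
    rw [hb]
    exact P.smul_mem _ (hall yk)
  -- ## Assembling the graded isomorphism
  have hofv : ofV G K v = pathElem G K (prefixFP ξ₀ 0) * pathStarElem G K (prefixFP ξ₀ 0) := by
    rw [pe_prefix_zero, ps_prefix_zero, hsrcξ, rel_vv]
  have hgofv : ρ (ofV G K v) x₀vec = Finsupp.single x₀p 1 := by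
    rw [hofv, hx₀vec]
    exact hρ.1 _ _ rfl x₀p x₀p p₀ catp0 catp0 (by rw [hx₀p]; simp)
  have hvne : ofV G K v ≠ 0 := by
    intro hc
    have h0 := hgofv
    rw [hc, map_zero, LinearMap.zero_apply] at h0
    exact one_ne_zero (Finsupp.single_eq_zero.mp h0.symm)
  refine ⟨?_, ⟨⟨x₀vec, hx₀ne⟩, bullet2⟩, ?_⟩
  · -- the graded isomorphism
    refine ⟨LinearEquiv.ofLinear
      ({ toFun := fun w => ⟨f₀ w, fmemN w⟩,
         map_add' := fun a b => Subtype.ext (by simp),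
         map_smul' := fun a b => Subtype.ext (by simp) } :
        KLCarrier G K p₀ →ₗ[K] ↥(Submodule.span (LPA G K) {ofV G K v}))
      ({ toFun := fun z => evalAt ρ x₀vec (z : LPA G K),
         map_add' := fun a b => by simp,
         map_smul' := fun a b => by simp } :
        ↥(Submodule.span (LPA G K) {ofV G K v}) →ₗ[K] KLCarrier G K p₀)
      (LinearMap.ext (fun z => Subtype.ext (by
        show f₀ (evalAt ρ x₀vec (z : LPA G K)) = (z : LPA G K)
        exact fgt _ z.2)))
      (LinearMap.ext (fun w => by
        show evalAt ρ x₀vec (f₀ w) = w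
        exact gtf w)), ?_, ?_, ?_⟩
    · -- equivariance
      intro η w
      show f₀ (ρ η w) = η • f₀ w
      have hw : ρ η w = ρ (η * f₀ w) x₀vec := by
        conv_lhs => rw [← gtf w]
        show ρ η (ρ (f₀ w) x₀vec) = _
        rw [map_mul]
        rfl
      rw [hw]
      have hmem3 : η * f₀ w ∈ Submodule.span (LPA G K) {ofV G K v} := by
        rw [← smul_eq_mul]
        exact Submodule.smul_mem _ η (fmemN w)
      have h3 := fgt _ hmem3
      rw [evalAt_apply] at h3
      rw [h3, smul_eq_mul]
    · -- grading, forward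
      intro k w hw
      show f₀ w ∈ LPAdeg G K k
      have hle : KLgr G K p₀ k ≤ Submodule.comap f₀ (LPAdeg G K k) := by
        apply Submodule.span_le.mpr
        rintro m ⟨yk, hyk, rfl⟩
        have hmm : f₀ (Finsupp.single yk 1) ∈ LPAdeg G K k := by
          rw [f₀_single]
          exact Submodule.subset_span ⟨μch yk, νch yk,
            (hc1 yk).1.trans (hc2 yk).1.symm, by rw [hc3 yk, hyk], rfl⟩
        exact hmm
      exact hle hw
    · -- grading, backward
      intro k z hz
      show evalAt ρ x₀vec (z : LPA G K) ∈ KLgr G K p₀ k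
      exact gt_grading k _ hz
  · -- graded simplicity of N
    constructor
    · intro hbot
      have hin : ofV G K v ∈ (⊥ : Submodule (LPA G K) (LPA G K)) :=
        hbot ▸ Submodule.mem_span_singleton_self _
      exact hvne (by simpa using hin)
    · intro Q hQle hQgr
      set P : Submodule K (KLCarrier G K p₀) :=
        Submodule.map (evalAt ρ x₀vec) (Q.restrictScalars K) with hPdef
      have hPρ : ∀ η : LPA G K, ∀ w ∈ P, ρ η w ∈ P := by
        rintro η w ⟨q, hq, rfl⟩
        refine ⟨η * q, ?_, ?_⟩
        · rw [← smul_eq_mul]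
          exact Q.smul_mem η hq
        · show evalAt ρ x₀vec (η * q) = ρ η (evalAt ρ x₀vec q)
          rw [evalAt_apply, evalAt_apply, map_mul]
          rfl
      have hPgr : GradedCarrier (fun k => KLgr G K p₀ k) ↑P := by
        rintro m ⟨q, hqQ, rfl⟩
        obtain ⟨lst, hl, hsum⟩ := hQgr q hqQ
        refine ⟨lst.map (evalAt ρ x₀vec), ?_, by rw [← hsum]; exact (map_list_sum _ _).symm⟩
        rintro z' hz'
        obtain ⟨z, hzl, rfl⟩ := List.mem_map.mp hz'
        obtain ⟨hzQ, kk, hzdeg⟩ := hl z hzl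
        exact ⟨⟨z, hzQ, rfl⟩, kk, gt_grading kk z hzdeg⟩
      rcases bullet2 P hPρ hPgr with hPb | hPt
      · left
        rw [eq_bot_iff]
        intro q hq
        have h1 : evalAt ρ x₀vec q ∈ P := ⟨q, hq, rfl⟩
        rw [hPb] at h1
        have h0 : evalAt ρ x₀vec q = 0 := by simpa using h1
        have h2 := fgt q (hQle hq)
        rw [h0, map_zero] at h2
        simp [← h2]
      · right
        apply le_antisymm hQle
        intro z hz
        have h1 : evalAt ρ x₀vec z ∈ P := hPt ▸ Submodule.mem_top
        obtain ⟨q, hqQ, hq⟩ := h1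
        have e1 : f₀ (evalAt ρ x₀vec q) = q := fgt q (hQle hqQ)
        rw [hq] at e1
        have e2 : f₀ (evalAt ρ x₀vec z) = z := fgt z hz
        rw [e1] at e2
        rw [← e2]
        exact hqQ
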